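/- Fix m ≥ 2 mean times between false alarms 1 ≤ τ_1 < ⋯ < τ_m, c_F > 0, and attacker types φ = 1,…,n_φ with priors π_φ ≥ 0 summing to 1 and payoffs satisfying 0 ≤ I_1^φ ≤ I_2^φ ≤ ⋯ ≤ I_m^φ for every φ. If c_F/τ_{m−1} > c_F/τ_m + Σ_{φ=1}^{n_φ} π_φ I_m^φ, then in every Bayesian Nash equilibrium (p*, q*_1, …, q*_{n_φ}) the defender's strategy is pure with p*_m = 1 (and p*_ν = 0 for all ν < m). In particular, no moving target defense exists. -/

import Mathlib

open Matrix BigOperators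

/-- A (mixed strategy) probability vector: nonnegative entries summing to one. -/
def IsProbVec {m : ℕ} (p : Fin m → ℝ) : Prop := (∀ i, 0 ≤ p i) ∧ ∑ i, p i = 1

/-- Defender cost matrix `Ω(φ)_{i,j} = c_F/τ_i + 1{j ≤ i}·I_j^φ`. -/
noncomputable def OmegaMat {m nφ : ℕ} (τ : Fin m → ℝ) (cF : ℝ) (I : Fin nφ → Fin m → ℝ)
    (φ : Fin nφ) : Matrix (Fin m) (Fin m) ℝ :=
  Matrix.of fun i j => cF / τ i + if j ≤ i then I φ j else 0

/-- Attacker payoff matrix `Υ(φ)_{i,j} = 1{j ≤ i}·I_j^φ`. -/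
noncomputable def UpsilonMat {m nφ : ℕ} (I : Fin nφ → Fin m → ℝ) (φ : Fin nφ) :
    Matrix (Fin m) (Fin m) ℝ :=
  Matrix.of fun i j => if j ≤ i then I φ j else 0

/-- Bayesian Nash equilibrium of the threshold-switching game: `p` minimizes the
prior-averaged defender cost against `(q_φ)` and each `q_φ` maximizes the payoff of
attacker type `φ` against `p`. -/
noncomputable def IsBNE {m nφ : ℕ} (τ : Fin m → ℝ) (cF : ℝ) (I : Fin nφ → Fin m → ℝ)
    (π : Fin nφ → ℝ) (p : Fin m → ℝ) (q : Fin nφ → Fin m → ℝ) : Prop :=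
  IsProbVec p ∧ (∀ φ, IsProbVec (q φ)) ∧
  (∀ p' : Fin m → ℝ, IsProbVec p' →
    ∑ φ, π φ * (p ⬝ᵥ (OmegaMat τ cF I φ *ᵥ q φ)) ≤
      ∑ φ, π φ * (p' ⬝ᵥ (OmegaMat τ cF I φ *ᵥ q φ))) ∧
  (∀ φ, ∀ q' : Fin m → ℝ, IsProbVec q' →
    p ⬝ᵥ (UpsilonMat I φ *ᵥ q') ≤ p ⬝ᵥ (UpsilonMat I φ *ᵥ q φ))

/-- If `c_F/τ_{m-1} > c_F/τ_m + Σ_φ π_φ I_m^φ`, then in every Bayesian Nash equilibrium the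
defender's strategy is pure with all mass on `τ_m`; in particular no MTD exists. -/
theorem no_mtd_of_strict_domination (m nφ : ℕ) (hm : 2 ≤ m)
    (τ : Fin m → ℝ) (hτmono : StrictMono τ) (hτ1 : 1 ≤ τ ⟨0, by omega⟩)
    (cF : ℝ) (hcF : 0 < cF)
    (π : Fin nφ → ℝ) (hπ0 : ∀ φ, 0 ≤ π φ) (hπ1 : ∑ φ, π φ = 1)
    (I : Fin nφ → Fin m → ℝ) (hI0 : ∀ φ, 0 ≤ I φ ⟨0, by omega⟩)
    (hImono : ∀ φ, Monotone (I φ))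
    (hdom : cF / τ ⟨m - 2, by omega⟩ >
      cF / τ ⟨m - 1, by omega⟩ + ∑ φ, π φ * I φ ⟨m - 1, by omega⟩) :
    ∀ (p : Fin m → ℝ) (q : Fin nφ → Fin m → ℝ), IsBNE τ cF I π p q →
      p ⟨m - 1, by omega⟩ = 1 ∧ ∀ ν : Fin m, (ν : ℕ) < m - 1 → p ν = 0 := by
  intro p q hBNE
  obtain ⟨hp, hq, hopt, -⟩ := hBNE
  set M1 : Fin m := ⟨m - 1, by omega⟩ with hM1
  set M2 : Fin m := ⟨m - 2, by omega⟩ with hM2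
  have hτpos : ∀ i, 0 < τ i := by
    intro i
    have h0 : (⟨0, by omega⟩ : Fin m) ≤ i := by simp [Fin.le_def]
    have := hτmono.monotone h0
    linarith
  have hIpos : ∀ φ j, 0 ≤ I φ j := by
    intro φ j
    have h0 : (⟨0, by omega⟩ : Fin m) ≤ j := by simp [Fin.le_def]
    exact le_trans (hI0 φ) (hImono φ h0)
  have hIle : ∀ φ (j : Fin m), I φ j ≤ I φ M1 := by
    intro φ j
    apply hImono φ
    simp [Fin.le_def, hM1]
    omega
  -- the prior-averaged cost of pure strategy i
  set C : Fin m → ℝ := fun i => ∑ φ, π φ * ((OmegaMat τ cF I φ *ᵥ q φ) i) with hC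
  have hcost : ∀ p' : Fin m → ℝ, IsProbVec p' →
      ∑ φ, π φ * (p' ⬝ᵥ (OmegaMat τ cF I φ *ᵥ q φ)) = ∑ i, p' i * C i := by
    intro p' _
    simp only [hC, dotProduct, Finset.mul_sum]
    rw [Finset.sum_comm]
    apply Finset.sum_congr rfl
    intro i _
    apply Finset.sum_congr rfl
    intro φ _
    ring
  -- value of pure strategy i
  have hmv : ∀ (φ : Fin nφ) (i : Fin m),
      (OmegaMat τ cF I φ *ᵥ q φ) i
        = cF / τ i + ∑ j, (if j ≤ i then I φ j else 0) * q φ j := by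
    intro φ i
    simp only [Matrix.mulVec, dotProduct, OmegaMat, Matrix.of_apply, add_mul,
      Finset.sum_add_distrib, ← Finset.mul_sum, (hq φ).2, mul_one]
  have hCval : ∀ i, C i = cF / τ i + ∑ φ, π φ * ∑ j, (if j ≤ i then I φ j else 0) * q φ j := by
    intro i
    simp only [hC, hmv, mul_add, Finset.sum_add_distrib, ← Finset.sum_mul, hπ1, one_mul]
  have hSnonneg : ∀ i, 0 ≤ ∑ φ, π φ * ∑ j, (if j ≤ i then I φ j else 0) * q φ j := by
    intro i
    apply Finset.sum_nonneg; intro φ _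
    apply mul_nonneg (hπ0 φ)
    apply Finset.sum_nonneg; intro j _
    apply mul_nonneg _ ((hq φ).1 j)
    split <;> [exact hIpos φ j; exact le_refl 0]
  have hCM1 : C M1 ≤ cF / τ M1 + ∑ φ, π φ * I φ M1 := by
    rw [hCval]
    refine add_le_add le_rfl ?_
    apply Finset.sum_le_sum; intro φ _
    apply mul_le_mul_of_nonneg_left _ (hπ0 φ)
    calc ∑ j, (if j ≤ M1 then I φ j else 0) * q φ j
        ≤ ∑ j, I φ M1 * q φ j := by
          apply Finset.sum_le_sum; intro j _
          apply mul_le_mul_of_nonneg_right _ ((hq φ).1 j)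
          split <;> [exact hIle φ j; exact hIpos φ M1]
      _ = I φ M1 := by rw [← Finset.mul_sum, (hq φ).2, mul_one]
  have hCgt : ∀ i : Fin m, i ≠ M1 → C M1 < C i := by
    intro i hi
    have hile : (i : ℕ) ≤ m - 2 := by
      have : (i : ℕ) ≠ m - 1 := fun h => hi (Fin.ext h)
      have := i.isLt; omega
    have hτle : τ i ≤ τ M2 := hτmono.monotone (by simpa [Fin.le_def, hM2] using hile)
    have h1 : cF / τ M2 ≤ cF / τ i :=
      div_le_div_of_nonneg_left hcF.le (hτpos i) hτle
    have h2 : cF / τ i ≤ C i := by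
      rw [hCval]; linarith [hSnonneg i]
    have : C M1 < cF / τ M2 := lt_of_le_of_lt hCM1 hdom
    linarith
  -- pure strategy M1 as a probability vector
  set e : Fin m → ℝ := fun j => if j = M1 then 1 else 0 with he
  have heprob : IsProbVec e := by
    constructor
    · intro i; simp only [he]; split <;> norm_num
    · simp [he]
  have hle : ∑ i, p i * C i ≤ C M1 := by
    have := hopt e heprob
    rw [hcost p hp, hcost e heprob] at this
    simpa [he, ite_mul, Finset.sum_ite_eq'] using this
  have hsum0 : ∑ i, p i * (C i - C M1) ≤ 0 := by
    have : ∑ i, p i * (C i - C M1) = (∑ i, p i * C i) - C M1 := by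
      simp [mul_sub, Finset.sum_sub_distrib, ← Finset.sum_mul, hp.2]
    linarith [hle, this.le, this.ge]
  have hterm : ∀ i ∈ Finset.univ, (0:ℝ) ≤ p i * (C i - C M1) := by
    intro i _
    by_cases hi : i = M1
    · simp [hi]
    · exact mul_nonneg (hp.1 i) (by linarith [hCgt i hi])
  have hall0 : ∀ i : Fin m, p i * (C i - C M1) = 0 := by
    have hs : ∑ i, p i * (C i - C M1) = 0 :=
      le_antisymm hsum0 (Finset.sum_nonneg hterm)
    intro i
    exact (Finset.sum_eq_zero_iff_of_nonneg hterm).mp hs i (Finset.mem_univ i)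
  have hzero : ∀ i : Fin m, i ≠ M1 → p i = 0 := by
    intro i hi
    rcases mul_eq_zero.mp (hall0 i) with h | h
    · exact h
    · exact absurd h (by have := hCgt i hi; intro h'; linarith)
  constructor
  · have := hp.2
    rw [Finset.sum_eq_single M1 (fun i _ hi => hzero i hi) (by simp)] at this
    exact this
  · intro ν hν
    apply hzero
    intro h
    rw [h] at hν
    simp [hM1] at hν
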